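/- There exist a row-stochastic 2×2 matrix P̂ (a 'model'), a probability vector d that is not stationary for P̂, γ ∈ (0,1), and a feature matrix X, such that the matrix = XᵀD(I − γP̂ᵀ)X has an eigenvalue with negative real part; hence ρ(I − αÂ) > 1 for all α > 0 and the corresponding TD iteration diverges for some initial weight. -/

import Mathlib

open Matrix

lemma spec_one (M : Matrix (Fin 1) (Fin 1) ℝ) :
    ((M 0 0 : ℝ) : ℂ) ∈ spectrum ℂ (M.map (algebraMap ℝ ℂ)) := by
  rw [spectrum.mem_iff]
  intro hu
  rw [Matrix.isUnit_iff_isUnit_det] at hu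
  simp [Matrix.det_fin_one, Matrix.algebraMap_matrix_apply, Matrix.map_apply] at hu

lemma Acomp : (!![(1:ℝ);2]ᵀ * Matrix.diagonal ![(1/2:ℝ),1/2] *
    ((1 : Matrix (Fin 2) (Fin 2) ℝ) - (9/10:ℝ) • (!![(0:ℝ),1;0,1]ᵀ)) * !![(1:ℝ);2]) = !![-(1/5)] := by
  ext i j
  fin_cases i <;> fin_cases j <;>
  norm_num [Matrix.mul_apply, Fin.sum_univ_two, Matrix.one_apply, Matrix.diagonal_apply,
    Matrix.transpose_apply, Matrix.vecHead, Matrix.vecTail]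

/-- there exist a row-stochastic 2×2 model `P̂`, a probability
vector `d` that is not stationary for `P̂`, `γ ∈ (0,1)`, and a feature matrix
`X`, such that `Â = Xᵀ diag(d) (I − γP̂ᵀ) X` has an eigenvalue with negative
real part; hence for every `α > 0` the matrix `I − αÂ` has an eigenvalue of
modulus greater than 1 (so the TD iteration diverges). -/
theorem model_based_td_divergence_exists :
    ∃ (Phat : Matrix (Fin 2) (Fin 2) ℝ) (d : Fin 2 → ℝ) (γ : ℝ)
      (X : Matrix (Fin 2) (Fin 1) ℝ),
      (∀ i j, 0 ≤ Phat i j) ∧ (∀ i, ∑ j, Phat i j = 1) ∧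
      (∀ i, 0 ≤ d i) ∧ (∑ i, d i = 1) ∧
      (¬ ∀ j, ∑ i, d i * Phat i j = d j) ∧
      0 < γ ∧ γ < 1 ∧
      (∃ lam ∈ spectrum ℂ
          (((Xᵀ * Matrix.diagonal d * ((1 : Matrix (Fin 2) (Fin 2) ℝ) - γ • Phatᵀ) * X
            : Matrix (Fin 1) (Fin 1) ℝ)).map (algebraMap ℝ ℂ)), lam.re < 0) ∧
      ∀ α : ℝ, 0 < α →
        ∃ mu ∈ spectrum ℂ
          ((((1 : Matrix (Fin 1) (Fin 1) ℝ) -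
              α • (Xᵀ * Matrix.diagonal d * ((1 : Matrix (Fin 2) (Fin 2) ℝ) - γ • Phatᵀ) * X))
            ).map (algebraMap ℝ ℂ)), 1 < ‖mu‖ := by
  refine ⟨!![(0:ℝ),1;0,1], ![(1/2:ℝ),1/2], 9/10, !![(1:ℝ);2], ?_, ?_, ?_, ?_, ?_, by norm_num,
    by norm_num, ?_, ?_⟩
  · intro i j; fin_cases i <;> fin_cases j <;> norm_num
  · intro i; fin_cases i <;> norm_num [Fin.sum_univ_two]
  · intro i; fin_cases i <;> norm_num
  · norm_num [Fin.sum_univ_two]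
  · intro h
    have := h 0
    norm_num [Fin.sum_univ_two] at this
  · rw [Acomp]
    exact ⟨((-(1/5) : ℝ) : ℂ), by simpa using spec_one !![-(1/5)], by norm_num⟩
  · intro α hα
    rw [Acomp]
    refine ⟨((1 + α/5 : ℝ) : ℂ), ?_, ?_⟩
    · have h : ((1 : Matrix (Fin 1) (Fin 1) ℝ) - α • (!![-(1/5)] : Matrix (Fin 1) (Fin 1) ℝ)) 0 0 = 1 + α/5 := by
        norm_num [Matrix.one_apply]
        ring
      simpa [h, div_eq_mul_inv] using spec_one ((1 : Matrix (Fin 1) (Fin 1) ℝ) - α • (!![-(1/5)] : Matrix (Fin 1) (Fin 1) ℝ))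
    · rw [Complex.norm_real]
      rw [Real.norm_eq_abs, abs_of_pos (by linarith)]
      linarith
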